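/- arXiv:2404.13012 — 2 statements merged into one kernel-verified Lean document; each statement's English description precedes it below -/
import Mathlib

section
/- Let α > 0 and define f: ℂ → ℂ by f(z) = (ln ln |z|)^{1/α}·z/|z| for |z| ≥ e^e and f(z) = e^{−e}·z for |z| < e^e. Then f is a homeomorphism of ℂ onto ℂ, differentiable a.e. with J_f(r e^{iθ}) = α^{−1}·(ln ln r)^{(2−α)/α}·(ln r)^{−1}·r^{−2} > 0 for r > e^e, f satisfies a.e. the equation f_z̄ − (z/z̄)·f_z = K(z)·|J_f(z)|^{1/2} with K(z) = −α^{1/2}·(ln|z|)^{1/2}·(ln ln|z|)^{1/2}·z/z̄ for |z| ≥ e^e and K(z) = −z/z̄ for 0 < |z| < e^e; moreover κ(0,r) = α·ln r·ln ln r for r ≥ e^e, so lim_{r→∞} κ(0,r)/ln r = ∞, while M_f(0,R) = (ln ln R)^{1/α} and consequently lim_{R→∞} M_f(0,R)/(ln R)^{1/α} = 0. -/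
open MeasureTheory Filter Metric

noncomputable section

/-- The Wirtinger derivative `f_z = (f_x - i f_y)/2`, where `f_x`, `f_y` are the
partial derivatives of `f` in the directions `1` and `i`. -/
def wDz (f : ℂ → ℂ) (z : ℂ) : ℂ :=
  (fderiv ℝ f z 1 - Complex.I * fderiv ℝ f z Complex.I) / 2

/-- The Wirtinger derivative `f_z̄ = (f_x + i f_y)/2`. -/
def wDzbar (f : ℂ → ℂ) (z : ℂ) : ℂ :=
  (fderiv ℝ f z 1 + Complex.I * fderiv ℝ f z Complex.I) / 2

/-- The Jacobian `J_f = |f_z|^2 - |f_z̄|^2`. -/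
def jac (f : ℂ → ℂ) (z : ℂ) : ℝ :=
  ‖wDz f z‖ ^ 2 - ‖wDzbar f z‖ ^ 2

/-- The nonlinear Beltrami equation
`f_z̄ - ((z - z0)/conj (z - z0)) f_z = K z0 (z) |J_f(z)|^(1/2)` at the point `z`. -/
def beltramiEq (z0 : ℂ) (K : ℂ → ℂ) (f : ℂ → ℂ) (z : ℂ) : Prop :=
  wDzbar f z - ((z - z0) / (starRingEnd ℂ) (z - z0)) * wDz f z
    = K z * (Real.sqrt |jac f z| : ℂ)

/-- The Luzin N-property: sets of measure zero are mapped to sets of measure zero. -/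
def LuzinN (f : ℂ → ℂ) : Prop :=
  ∀ E : Set ℂ, volume E = 0 → volume (f '' E) = 0

/-- A regular homeomorphic solution of the nonlinear Beltrami equation: a homeomorphism
of `ℂ` onto `ℂ`, differentiable a.e., with `J_f > 0` a.e., possessing the Luzin
N-property, and satisfying the equation a.e. -/
structure IsRegularSolution (z0 : ℂ) (K : ℂ → ℂ) (f : ℂ → ℂ) : Prop where
  homeo : IsHomeomorph f
  diff : ∀ᵐ z ∂(volume : Measure ℂ), DifferentiableAt ℝ f z
  jacPos : ∀ᵐ z ∂(volume : Measure ℂ), 0 < jac f z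
  luzin : LuzinN f
  eqn : ∀ᵐ z ∂(volume : Measure ℂ), beltramiEq z0 K f z

/-- `S_f(z0, r)`: the area of the image of the disk `B(z0, r)`. -/
def Sf (f : ℂ → ℂ) (z0 : ℂ) (r : ℝ) : ℝ := (volume (f '' ball z0 r)).toReal

/-- `κ(z0, r) = (1/(2π)) ∫₀^{2π} |K(z0 + r e^{iθ})|² dθ`. -/
def kappa (K : ℂ → ℂ) (z0 : ℂ) (r : ℝ) : ℝ :=
  (1 / (2 * Real.pi)) *
    ∫ θ in (0 : ℝ)..(2 * Real.pi),
      ‖K (z0 + (r : ℂ) * Complex.exp ((θ : ℂ) * Complex.I))‖ ^ 2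

/-- `M_f(z0, R) = max_{|z - z0| = R} |f z - f z0|`. -/
def Mf (f : ℂ → ℂ) (z0 : ℂ) (R : ℝ) : ℝ :=
  sSup ((fun z => ‖f z - f z0‖) '' sphere z0 R)

/-- `m_f(z0, r) = min_{|z - z0| = r} |f z - f z0|`. -/
def mf (f : ℂ → ℂ) (z0 : ℂ) (r : ℝ) : ℝ :=
  sInf ((fun z => ‖f z - f z0‖) '' sphere z0 r)

/-! ### Auxiliary material for Statement 18 -/

namespace Stmt18

def cc (α r : ℝ) : ℝ := Real.log (Real.log r) ^ (1/α) / r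

def ccd (α r : ℝ) : ℝ :=
  ((1/α) * Real.log (Real.log r) ^ (1/α - 1) / Real.log r - Real.log (Real.log r) ^ (1/α)) / r^2

lemma one_lt_ee : (1:ℝ) < Real.exp (Real.exp 1) := by
  nlinarith [Real.exp_pos (1:ℝ), Real.add_one_le_exp (1:ℝ), Real.add_one_le_exp (Real.exp 1)]

lemma ee_pos : (0:ℝ) < Real.exp (Real.exp 1) := Real.exp_pos _

lemma basic_facts {r : ℝ} (hr : Real.exp (Real.exp 1) ≤ r) :
    1 < r ∧ Real.exp 1 ≤ Real.log r ∧ 1 ≤ Real.log (Real.log r) ∧ 0 < Real.log r ∧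
      0 < Real.log (Real.log r) := by
  have h1 : (1:ℝ) < r := lt_of_lt_of_le one_lt_ee hr
  have h2 : Real.exp 1 ≤ Real.log r := by
    rw [← Real.log_exp (Real.exp 1)]
    exact Real.log_le_log (Real.exp_pos _) hr
  have h4 : 0 < Real.log r := lt_of_lt_of_le (Real.exp_pos 1) h2
  have h3 : 1 ≤ Real.log (Real.log r) := by
    rw [← Real.log_exp 1]
    exact Real.log_le_log (Real.exp_pos _) h2
  exact ⟨h1, h2, h3, h4, lt_of_lt_of_le one_pos h3⟩

lemma hasFDerivAt_cabs (z : ℂ) (hz : z ≠ 0) :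
    HasFDerivAt (fun w => ‖w‖)
      (((‖z‖)⁻¹ * z.re) • Complex.reCLM + ((‖z‖)⁻¹ * z.im) • Complex.imCLM) z := by
  have hns : Complex.normSq z ≠ 0 := by
    simpa [Complex.normSq_eq_norm_sq, pow_eq_zero_iff] using norm_ne_zero_iff.mpr hz
  have hre := Complex.reCLM.hasFDerivAt (x := z)
  have him := Complex.imCLM.hasFDerivAt (x := z)
  have h1 := (hre.mul hre).add (him.mul him)
  have h2 : HasDerivAt Real.sqrt (1/(2*Real.sqrt (Complex.normSq z))) (Complex.normSq z) :=
    Real.hasDerivAt_sqrt hns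
  have h3 := h2.comp_hasFDerivAt z h1
  have habs : (fun w : ℂ => ‖w‖)
      = fun w => Real.sqrt (Complex.reCLM w * Complex.reCLM w + Complex.imCLM w * Complex.imCLM w) := by
    funext w; simp [Complex.norm_def, Complex.normSq_apply]
  rw [habs]
  refine h3.congr_fderiv ?_
  ext v
  have hsq : Real.sqrt (Complex.normSq z) = ‖z‖ := rfl
  simp [ContinuousLinearMap.add_apply, ContinuousLinearMap.smul_apply, hsq]
  field_simp
  ring

lemma hasDerivAt_cc {α r : ℝ} (hα : 0 < α) (hr : Real.exp (Real.exp 1) ≤ r) :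
    HasDerivAt (cc α) (ccd α r) r := by
  obtain ⟨h1, h2, h3, h4, h5⟩ := basic_facts hr
  have hr0 : (0:ℝ) < r := lt_trans one_pos h1
  have hlog : HasDerivAt Real.log r⁻¹ r := Real.hasDerivAt_log hr0.ne'
  have hll : HasDerivAt (fun s => Real.log (Real.log s)) ((Real.log r)⁻¹ * r⁻¹) r :=
    (Real.hasDerivAt_log h4.ne').comp r hlog
  have hpow : HasDerivAt (fun s => Real.log (Real.log s) ^ (1/α))
      ((1/α) * Real.log (Real.log r) ^ (1/α - 1) * ((Real.log r)⁻¹ * r⁻¹)) r :=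
    by have := (Real.hasDerivAt_rpow_const (p := 1/α) (Or.inl h5.ne')).comp r hll; exact this
  have := hpow.div (hasDerivAt_id r) hr0.ne'
  refine this.congr_deriv ?_
  unfold ccd
  simp only [id]
  field_simp

lemma alg1 (a b r x y : ℝ) (hr : r ≠ 0) (hxy : x^2 + y^2 = r^2) :
    ((((b * (r⁻¹ * x) : ℝ):ℂ) * ((x:ℂ) + (y:ℂ)*Complex.I) + (a:ℂ))
      - Complex.I * ((((b * (r⁻¹ * y) : ℝ)):ℂ) * ((x:ℂ) + (y:ℂ)*Complex.I) + (a:ℂ) * Complex.I))/2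
    = ((a + b*r/2 : ℝ) : ℂ) := by
  have hk : (x:ℂ)^2 + (y:ℂ)^2 = (r:ℂ)^2 := by exact_mod_cast congrArg (Complex.ofReal) hxy
  have hr' : (r:ℂ) ≠ 0 := by exact_mod_cast hr
  push_cast
  field_simp
  linear_combination (b:ℂ) * hk + (-((b:ℂ)*(y:ℂ)^2) - (a:ℂ)*(r:ℂ)) * Complex.I_sq

lemma alg2 (a b r x y : ℝ) (hr : r ≠ 0) :
    ((((b * (r⁻¹ * x) : ℝ):ℂ) * ((x:ℂ) + (y:ℂ)*Complex.I) + (a:ℂ))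
      + Complex.I * ((((b * (r⁻¹ * y) : ℝ)):ℂ) * ((x:ℂ) + (y:ℂ)*Complex.I) + (a:ℂ) * Complex.I))/2
    = ((b / (2*r) : ℝ) : ℂ) * ((x:ℂ) + (y:ℂ)*Complex.I)^2 := by
  have hr' : (r:ℂ) ≠ 0 := by exact_mod_cast hr
  push_cast
  field_simp
  linear_combination ((a:ℂ)*(r:ℂ)) * Complex.I_sq

section Main

variable {α : ℝ} (hα : 0 < α) (f : ℂ → ℂ)
variable (hfdef : f = fun z => if Real.exp (Real.exp 1) ≤ ‖z‖
      then ((Real.log (Real.log (‖z‖)) ^ (1 / α) : ℝ) : ℂ) * (z / (‖z‖ : ℂ))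
      else ((Real.exp (-Real.exp 1) : ℝ) : ℂ) * z)

include hα hfdef in
lemma fder (z : ℂ) (hz : Real.exp (Real.exp 1) < ‖z‖) :
    DifferentiableAt ℝ f z ∧
    fderiv ℝ f z 1 = ((ccd α (‖z‖) * ((‖z‖)⁻¹ * z.re) : ℝ) : ℂ) * z
        + ((cc α (‖z‖) : ℝ) : ℂ) ∧
    fderiv ℝ f z Complex.I = ((ccd α (‖z‖) * ((‖z‖)⁻¹ * z.im) : ℝ) : ℂ) * z
        + ((cc α (‖z‖) : ℝ) : ℂ) * Complex.I := by
  set r := ‖z‖ with hrdef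
  have hr0 : 0 < r := lt_trans (Real.exp_pos _) hz
  have hz0 : z ≠ 0 := by
    simpa using norm_ne_zero_iff.mp (ne_of_gt hr0)
  have habs := hasFDerivAt_cabs z hz0
  have hc := hasDerivAt_cc hα (le_of_lt hz)
  have h3 := hc.comp_hasFDerivAt z habs
  have h4 := Complex.ofRealCLM.hasFDerivAt.comp z h3
  have h5 : HasFDerivAt (fun w : ℂ => w) (ContinuousLinearMap.id ℝ ℂ) z := hasFDerivAt_id z
  have h6 := h4.mul' h5
  have hev : (fun w : ℂ => ((cc α (‖w‖) : ℝ) : ℂ) * w) =ᶠ[nhds z] f := by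
    have hopen : IsOpen {w : ℂ | Real.exp (Real.exp 1) < ‖w‖} :=
      isOpen_lt continuous_const continuous_norm
    filter_upwards [hopen.mem_nhds hz] with w hw
    have hw0 : ‖w‖ ≠ 0 := ne_of_gt (lt_trans (Real.exp_pos _) hw)
    rw [hfdef]
    simp only [if_pos (le_of_lt hw)]
    rw [cc]
    push_cast
    field_simp
  have h7 : HasFDerivAt f _ z := h6.congr_of_eventuallyEq hev.symm
  refine ⟨h7.differentiableAt, ?_, ?_⟩ <;>
  · rw [h7.fderiv]
    simp [ContinuousLinearMap.smul_apply, ContinuousLinearMap.add_apply, Complex.ofRealCLM_apply,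
      ContinuousLinearMap.smulRight_apply, ContinuousLinearMap.comp_apply]
    push_cast
    ring

include hα hfdef in
lemma wirt (z : ℂ) (hz : Real.exp (Real.exp 1) < ‖z‖) :
    wDz f z = ((cc α (‖z‖) + ccd α (‖z‖) * ‖z‖ / 2 : ℝ) : ℂ) ∧
    wDzbar f z = ((ccd α (‖z‖) / (2 * ‖z‖) : ℝ) : ℂ) * z^2 := by
  obtain ⟨hdiff, h1, hI⟩ := fder hα f hfdef z hz
  set r := ‖z‖ with hrdef
  have hr0 : 0 < r := lt_trans (Real.exp_pos _) hz
  have hxy : z.re^2 + z.im^2 = r^2 := by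
    rw [hrdef, Complex.sq_norm, Complex.normSq_apply]; ring
  constructor
  · rw [wDz, h1, hI]
    have := alg1 (cc α r) (ccd α r) r z.re z.im hr0.ne' hxy
    rwa [Complex.re_add_im z] at this
  · rw [wDzbar, h1, hI]
    have := alg2 (cc α r) (ccd α r) r z.re z.im hr0.ne'
    rwa [Complex.re_add_im z] at this

include hα hfdef in
lemma jac_eq (z : ℂ) (hz : Real.exp (Real.exp 1) < ‖z‖) :
    jac f z = α⁻¹ * Real.log (Real.log (‖z‖)) ^ ((2 - α) / α) *
      (Real.log (‖z‖))⁻¹ * ((‖z‖) ^ 2)⁻¹ := by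
  obtain ⟨hwz, hwzb⟩ := wirt hα f hfdef z hz
  set r := ‖z‖ with hrdef
  obtain ⟨h1, h2, h3, hL, hu⟩ := basic_facts (le_of_lt hz)
  have hr0 : 0 < r := lt_trans one_pos h1
  rw [jac, hwz, hwzb]
  rw [norm_mul, Complex.norm_real, Real.norm_eq_abs, Complex.norm_real, Real.norm_eq_abs, norm_pow, ← hrdef]
  rw [mul_pow, sq_abs, sq_abs]
  have e2 : Real.log (Real.log r) ^ (1/α) * Real.log (Real.log r) ^ (1/α - 1)
      = Real.log (Real.log r) ^ ((2-α)/α) := by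
    rw [← Real.rpow_add hu]; congr 1; field_simp; ring
  rw [cc, ccd, ← e2]
  have hL0 : Real.log r ≠ 0 := hL.ne'
  have hr0' : r ≠ 0 := hr0.ne'
  field_simp
  ring

include hα hfdef in
lemma jac_pos (z : ℂ) (hz : Real.exp (Real.exp 1) < ‖z‖) : 0 < jac f z := by
  rw [jac_eq hα f hfdef z hz]
  obtain ⟨h1, h2, h3, hL, hu⟩ := basic_facts (le_of_lt hz)
  have hr0 : 0 < ‖z‖ := lt_trans one_pos h1
  exact mul_pos (mul_pos (mul_pos (inv_pos.2 hα) (Real.rpow_pos_of_pos hu _)) (inv_pos.2 hL))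
    (inv_pos.2 (pow_pos hr0 2))

include hα hfdef in
lemma inner_region (z : ℂ) (hz : ‖z‖ < Real.exp (Real.exp 1)) :
    DifferentiableAt ℝ f z ∧ wDz f z = ((Real.exp (-Real.exp 1) : ℝ):ℂ) ∧ wDzbar f z = 0 := by
  set c : ℂ := ((Real.exp (-Real.exp 1) : ℝ):ℂ) with hc
  have hev : (fun w : ℂ => c * w) =ᶠ[nhds z] f := by
    have hopen : IsOpen {w : ℂ | ‖w‖ < Real.exp (Real.exp 1)} :=
      isOpen_lt continuous_norm continuous_const
    filter_upwards [hopen.mem_nhds hz] with w hw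
    rw [hfdef]
    simp only [if_neg (not_le.mpr hw)]
  have hD : HasFDerivAt (fun w : ℂ => c * w) (c • ContinuousLinearMap.id ℝ ℂ) z := by
    simpa using (hasFDerivAt_id z).const_mul c
  have h7 : HasFDerivAt f (c • ContinuousLinearMap.id ℝ ℂ) z :=
    hD.congr_of_eventuallyEq hev.symm
  have hf1 : fderiv ℝ f z 1 = c := by rw [h7.fderiv]; simp
  have hfI : fderiv ℝ f z Complex.I = c * Complex.I := by rw [h7.fderiv]; simp
  refine ⟨h7.differentiableAt, ?_, ?_⟩
  · rw [wDz, hf1, hfI]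
    linear_combination (-(c:ℂ)/2) * Complex.I_sq
  · rw [wDzbar, hf1, hfI]
    linear_combination ((c:ℂ)/2) * Complex.I_sq

end Main

lemma sqrt_identity {α L u r : ℝ} (hα : 0 < α) (hL : 0 < L) (hu : 0 < u) (hr : 0 < r) :
    Real.sqrt α * Real.sqrt L * Real.sqrt u * Real.sqrt (α⁻¹ * u^((2-α)/α) * L⁻¹ * (r^2)⁻¹)
      = u^(1/α)/r := by
  have hprod : α * L * u * (α⁻¹ * u^((2-α)/α) * L⁻¹ * (r^2)⁻¹) = (u^(1/α)/r)^2 := by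
    have h2 : u ^ (1/α) * u ^ (1/α) = u ^ (1:ℝ) * u ^ ((2-α)/α) := by
      rw [← Real.rpow_add hu, ← Real.rpow_add hu]; congr 1; field_simp; ring
    rw [div_pow, sq, sq, h2, Real.rpow_one]
    field_simp
  rw [← Real.sqrt_mul hα.le, ← Real.sqrt_mul (mul_nonneg hα.le hL.le),
    ← Real.sqrt_mul (by positivity), hprod, Real.sqrt_sq (by positivity)]

section Main2

variable {α : ℝ} (hα : 0 < α) (f K : ℂ → ℂ)
variable (hfdef : f = fun z => if Real.exp (Real.exp 1) ≤ ‖z‖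
      then ((Real.log (Real.log (‖z‖)) ^ (1 / α) : ℝ) : ℂ) * (z / (‖z‖ : ℂ))
      else ((Real.exp (-Real.exp 1) : ℝ) : ℂ) * z)
variable (hKdef : K = fun z => if Real.exp (Real.exp 1) ≤ ‖z‖
      then -((Real.sqrt α * Real.sqrt (Real.log (‖z‖)) *
          Real.sqrt (Real.log (Real.log (‖z‖))) : ℝ) : ℂ) * (z / (starRingEnd ℂ) z)
      else -(z / (starRingEnd ℂ) z))

include hα hfdef hKdef in
lemma beltrami_outer (z : ℂ) (hz : Real.exp (Real.exp 1) < ‖z‖) :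
    beltramiEq 0 K f z := by
  obtain ⟨hwz, hwzb⟩ := wirt hα f hfdef z hz
  set r := ‖z‖ with hrdef
  obtain ⟨h1, h2, h3, hL, hu⟩ := basic_facts (le_of_lt hz)
  have hr0 : 0 < r := lt_trans one_pos h1
  have hz0 : z ≠ 0 := by simpa using norm_ne_zero_iff.mp (ne_of_gt hr0)
  have hc0 : (starRingEnd ℂ) z ≠ 0 := by
    simpa using hz0
  have hr2 : ((r^2 : ℝ) : ℂ) ≠ 0 := by exact_mod_cast (pow_pos hr0 2).ne'
  have hzz : z * (starRingEnd ℂ) z = ((r^2 : ℝ) : ℂ) := by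
    rw [Complex.mul_conj]
    norm_cast
    rw [Complex.normSq_eq_norm_sq]
  have hdivzz : z / (starRingEnd ℂ) z = z^2 / ((r^2:ℝ):ℂ) := by
    rw [div_eq_div_iff hc0 hr2]
    linear_combination (-z) * hzz
  have key : (Real.sqrt α * Real.sqrt (Real.log r) * Real.sqrt (Real.log (Real.log r)))
      * Real.sqrt |jac f z| = cc α r := by
    rw [abs_of_pos (jac_pos hα f hfdef z hz), jac_eq hα f hfdef z hz, ← hrdef, cc]
    exact sqrt_identity hα hL hu hr0
  rw [beltramiEq, sub_zero, hwz, hwzb, hKdef]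
  simp only [if_pos (le_of_lt hz), ← hrdef]
  rw [show (-((Real.sqrt α * Real.sqrt (Real.log r) * Real.sqrt (Real.log (Real.log r)) : ℝ) : ℂ)
        * (z / (starRingEnd ℂ) z)) * ((Real.sqrt |jac f z| : ℝ) : ℂ)
      = -(z / (starRingEnd ℂ) z) * (((Real.sqrt α * Real.sqrt (Real.log r) *
          Real.sqrt (Real.log (Real.log r))) * Real.sqrt |jac f z| : ℝ) : ℂ) by push_cast; ring,
    key, hdivzz]
  have hrC : (r:ℂ) ≠ 0 := by exact_mod_cast hr0.ne'
  push_cast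
  field_simp
  ring

include hα hfdef hKdef in
lemma beltrami_inner (z : ℂ) (hz : ‖z‖ < Real.exp (Real.exp 1)) :
    beltramiEq 0 K f z := by
  obtain ⟨hdiff, hwz, hwzb⟩ := inner_region hα f hfdef z hz
  have hexp : (0:ℝ) < Real.exp (-Real.exp 1) := Real.exp_pos _
  have hjac : jac f z = Real.exp (-Real.exp 1) ^ 2 := by
    rw [jac, hwz, hwzb, Complex.norm_real, Real.norm_eq_abs, abs_of_pos hexp, norm_zero]
    ring
  have hsqrt : Real.sqrt |jac f z| = Real.exp (-Real.exp 1) := by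
    rw [hjac, abs_of_pos (pow_pos hexp 2), Real.sqrt_sq hexp.le]
  rw [beltramiEq, sub_zero, hwz, hwzb, hKdef, hsqrt]
  simp only [if_neg (not_le.mpr hz)]
  ring

end Main2

section Homeo

variable {α : ℝ} (hα : 0 < α) (f : ℂ → ℂ)
variable (hfdef : f = fun z => if Real.exp (Real.exp 1) ≤ ‖z‖
      then ((Real.log (Real.log (‖z‖)) ^ (1 / α) : ℝ) : ℂ) * (z / (‖z‖ : ℂ))
      else ((Real.exp (-Real.exp 1) : ℝ) : ℂ) * z)

/-- The inverse map. -/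
def finv (α : ℝ) (w : ℂ) : ℂ := if 1 ≤ ‖w‖
  then ((Real.exp (Real.exp (‖w‖ ^ α)) : ℝ) : ℂ) * (w / (‖w‖ : ℂ))
  else ((Real.exp (Real.exp 1) : ℝ) : ℂ) * w

lemma exp_neg_mul : Real.exp (-Real.exp 1) * Real.exp (Real.exp 1) = 1 := by
  rw [← Real.exp_add]; simp

include hα hfdef in
lemma left_inv (z : ℂ) : finv α (f z) = z := by
  rcases le_or_gt (Real.exp (Real.exp 1)) (‖z‖) with hz | hz
  · set r := ‖z‖ with hrdef
    obtain ⟨h1, h2, h3, hL, hu⟩ := basic_facts hz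
    have hr0 : 0 < r := lt_trans one_pos h1
    set u := Real.log (Real.log r) with hudef
    set c := u ^ (1/α) with hcdef
    have hc1 : 1 ≤ c := by
      calc (1:ℝ) = 1 ^ (1/α) := (Real.one_rpow _).symm
      _ ≤ u ^ (1/α) := Real.rpow_le_rpow zero_le_one h3 (by positivity)
    have hc0 : 0 < c := lt_of_lt_of_le one_pos hc1
    have hfz : f z = (c : ℂ) * (z / (r : ℂ)) := by rw [hfdef]; exact if_pos hz
    have habsfz : ‖f z‖ = c := by
      rw [hfz, norm_mul, Complex.norm_real, Real.norm_eq_abs, abs_of_pos hc0, norm_div, Complex.norm_real, Real.norm_eq_abs,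
        abs_of_pos hr0, ← hrdef, div_self hr0.ne', mul_one]
    have hcα : c ^ α = u := by
      rw [hcdef, ← Real.rpow_mul hu.le, one_div, inv_mul_cancel₀ hα.ne', Real.rpow_one]
    have hexpu : Real.exp (Real.exp u) = r := by
      rw [hudef, Real.exp_log hL, Real.exp_log hr0]
    rw [finv, if_pos (habsfz ▸ hc1), habsfz, hcα, hexpu, hfz]
    have hcC : (c : ℂ) ≠ 0 := by exact_mod_cast hc0.ne'
    have hrC : (r : ℂ) ≠ 0 := by exact_mod_cast hr0.ne'
    field_simp
  · have hfz : f z = ((Real.exp (-Real.exp 1) : ℝ) : ℂ) * z := by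
      rw [hfdef]; simp only [if_neg (not_le.mpr hz)]
    have habsfz : ‖f z‖ < 1 := by
      rw [hfz, norm_mul, Complex.norm_real, Real.norm_eq_abs, abs_of_pos (Real.exp_pos _)]
      calc Real.exp (-Real.exp 1) * ‖z‖
          < Real.exp (-Real.exp 1) * Real.exp (Real.exp 1) :=
            mul_lt_mul_of_pos_left hz (Real.exp_pos _)
      _ = 1 := exp_neg_mul
    rw [finv, if_neg (not_le.mpr habsfz), hfz, ← mul_assoc, ← Complex.ofReal_mul,
      mul_comm (Real.exp (Real.exp 1)), exp_neg_mul]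
    simp

include hα hfdef in
lemma right_inv (w : ℂ) : f (finv α w) = w := by
  rcases le_or_gt 1 (‖w‖) with hw | hw
  · set s := ‖w‖ with hsdef
    have hs0 : 0 < s := lt_of_lt_of_le one_pos hw
    have hsα : 1 ≤ s ^ α := by
      calc (1:ℝ) = 1 ^ α := (Real.one_rpow _).symm
      _ ≤ s ^ α := Real.rpow_le_rpow zero_le_one hw hα.le
    set e := Real.exp (Real.exp (s ^ α)) with hedef
    have he0 : 0 < e := Real.exp_pos _
    have hv : finv α w = (e : ℂ) * (w / (s : ℂ)) := by rw [finv]; exact if_pos hw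
    have habsv : ‖finv α w‖ = e := by
      rw [hv, norm_mul, Complex.norm_real, Real.norm_eq_abs, abs_of_pos he0, norm_div, Complex.norm_real, Real.norm_eq_abs,
        abs_of_pos hs0, ← hsdef, div_self hs0.ne', mul_one]
    have hE : Real.exp (Real.exp 1) ≤ e := by
      rw [hedef]
      exact Real.exp_le_exp.mpr (Real.exp_le_exp.mpr hsα)
    have hloglog : Real.log (Real.log e) = s ^ α := by
      rw [hedef, Real.log_exp, Real.log_exp]
    have hpow : (s ^ α) ^ (1/α) = s := by
      rw [← Real.rpow_mul hs0.le, mul_one_div, div_self hα.ne', Real.rpow_one]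
    rw [hfdef]
    have heC : (e : ℂ) ≠ 0 := by exact_mod_cast he0.ne'
    have hsC : (s : ℂ) ≠ 0 := by exact_mod_cast hs0.ne'
    simp only [habsv, if_pos hE, hloglog, hpow]
    rw [hv]
    field_simp
  · have hv : finv α w = ((Real.exp (Real.exp 1) : ℝ) : ℂ) * w := by
      rw [finv]; simp only [if_neg (not_le.mpr hw)]
    have habsv : ‖finv α w‖ < Real.exp (Real.exp 1) := by
      rw [hv, norm_mul, Complex.norm_real, Real.norm_eq_abs, abs_of_pos (Real.exp_pos _)]
      calc Real.exp (Real.exp 1) * ‖w‖ < Real.exp (Real.exp 1) * 1 :=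
        mul_lt_mul_of_pos_left hw (Real.exp_pos _)
      _ = Real.exp (Real.exp 1) := mul_one _
    rw [hfdef]
    simp only [if_neg (not_le.mpr habsv)]
    rw [hv, ← mul_assoc, ← Complex.ofReal_mul, exp_neg_mul, Complex.ofReal_one, one_mul]

include hα hfdef in
lemma f_boundary (w : ℂ) (hw : ‖w‖ ≤ Real.exp (Real.exp 1)) :
    f w = ((Real.exp (-Real.exp 1) : ℝ) : ℂ) * w := by
  rcases eq_or_lt_of_le hw with heq | hlt
  · rw [hfdef]
    simp only [heq, if_pos le_rfl, Real.log_exp, Real.one_rpow]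
    rw [Real.exp_neg]
    push_cast
    rw [one_mul, div_eq_inv_mul]
  · rw [hfdef]; simp only [if_neg (not_le.mpr hlt)]

include hα hfdef in
lemma f_cont : Continuous f := by
  rw [continuous_iff_continuousAt]
  intro z
  rcases lt_trichotomy (‖z‖) (Real.exp (Real.exp 1)) with hlt | heq | hgt
  · have hc : ContinuousAt (fun w : ℂ => ((Real.exp (-Real.exp 1) : ℝ) : ℂ) * w) z :=
      (continuous_const.mul continuous_id).continuousAt
    apply hc.congr
    have hopen : IsOpen {w : ℂ | ‖w‖ < Real.exp (Real.exp 1)} :=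
      isOpen_lt continuous_norm continuous_const
    filter_upwards [hopen.mem_nhds hlt] with w hw
    rw [hfdef]; simp only [if_neg (not_le.mpr hw)]
  · -- boundary point
    have hE0 : (0:ℝ) < Real.exp (Real.exp 1) := Real.exp_pos _
    have hle : ContinuousWithinAt f {w : ℂ | ‖w‖ ≤ Real.exp (Real.exp 1)} z := by
      apply ((continuous_const.mul continuous_id).continuousWithinAt).congr
      · intro w hw
        exact f_boundary hα f hfdef w hw
      · exact f_boundary hα f hfdef z (le_of_eq heq)
    have hge : ContinuousWithinAt f {w : ℂ | Real.exp (Real.exp 1) ≤ ‖w‖} z := by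
      have habs : ContinuousAt (fun w : ℂ => ‖w‖) z := continuous_norm.continuousAt
      have h1 : ContinuousAt (fun w : ℂ => Real.log (‖w‖)) z :=
        (Real.continuousAt_log (by rw [heq]; exact hE0.ne')).comp habs
      have h2 : ContinuousAt (fun w : ℂ => Real.log (Real.log (‖w‖))) z := by
        exact ContinuousAt.comp (x := z) (g := Real.log)
          (f := fun w : ℂ => Real.log (‖w‖))
          (Real.continuousAt_log (show Real.log (‖z‖) ≠ 0 by
            rw [heq, Real.log_exp]; exact (Real.exp_pos 1).ne')) h1
      have h3 : ContinuousAt (fun w : ℂ => Real.log (Real.log (‖w‖)) ^ (1/α)) z := by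
        exact ContinuousAt.comp (Real.continuousAt_rpow_const _ _
          (Or.inl (by rw [heq, Real.log_exp, Real.log_exp]; exact one_ne_zero))) h2
      have h5 : ContinuousAt (fun w : ℂ => w / ((‖w‖ : ℝ) : ℂ)) z := by
        apply continuousAt_id.div (Complex.continuous_ofReal.continuousAt.comp habs)
        show ((‖z‖ : ℝ) : ℂ) ≠ 0
        rw [heq]
        exact_mod_cast hE0.ne'
      have hF : ContinuousAt (fun w : ℂ =>
          ((Real.log (Real.log (‖w‖)) ^ (1 / α) : ℝ) : ℂ)
            * (w / ((‖w‖ : ℝ) : ℂ))) z :=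
        (Complex.continuous_ofReal.continuousAt.comp h3).mul h5
      apply hF.continuousWithinAt.congr
      · intro w hw
        rw [hfdef]; exact if_pos hw
      · rw [hfdef]; exact if_pos (le_of_eq heq.symm)
    have huniv := hle.union hge
    rw [show {w : ℂ | ‖w‖ ≤ Real.exp (Real.exp 1)}
        ∪ {w : ℂ | Real.exp (Real.exp 1) ≤ ‖w‖} = Set.univ by
      ext w; simp [le_total]] at huniv
    rwa [continuousWithinAt_univ] at huniv
  · exact (fder hα f hfdef z hgt).1.continuousAt

lemma finv_cont (hα : 0 < α) : Continuous (finv α) := by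
  rw [continuous_iff_continuousAt]
  intro z
  have hgeCont : ∀ w : ℂ, ‖w‖ ≠ 0 →
      ContinuousAt (fun w : ℂ =>
        ((Real.exp (Real.exp (‖w‖ ^ α)) : ℝ) : ℂ)
          * (w / ((‖w‖ : ℝ) : ℂ))) w := by
    intro w hw0
    have habs : ContinuousAt (fun w : ℂ => ‖w‖) w := continuous_norm.continuousAt
    have h1 : ContinuousAt (fun w : ℂ => ‖w‖ ^ α) w :=
      ContinuousAt.comp (Real.continuousAt_rpow_const _ _ (Or.inl hw0)) habs
    have h2 : ContinuousAt (fun w : ℂ => Real.exp (Real.exp (‖w‖ ^ α))) w :=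
      Real.continuous_exp.continuousAt.comp (Real.continuous_exp.continuousAt.comp h1)
    have h5 : ContinuousAt (fun w : ℂ => w / ((‖w‖ : ℝ) : ℂ)) w := by
      apply continuousAt_id.div (Complex.continuous_ofReal.continuousAt.comp habs)
      show ((‖w‖ : ℝ) : ℂ) ≠ 0
      exact_mod_cast hw0
    exact (Complex.continuous_ofReal.continuousAt.comp h2).mul h5
  rcases lt_trichotomy (‖z‖) 1 with hlt | heq | hgt
  · have hc : ContinuousAt (fun w : ℂ => ((Real.exp (Real.exp 1) : ℝ) : ℂ) * w) z :=
      (continuous_const.mul continuous_id).continuousAt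
    apply hc.congr
    have hopen : IsOpen {w : ℂ | ‖w‖ < 1} :=
      isOpen_lt continuous_norm continuous_const
    filter_upwards [hopen.mem_nhds hlt] with w hw
    rw [finv]; simp only [if_neg (not_le.mpr hw)]
  · have hbdry : ∀ w : ℂ, ‖w‖ ≤ 1 →
        finv α w = ((Real.exp (Real.exp 1) : ℝ) : ℂ) * w := by
      intro w hw
      rcases eq_or_lt_of_le hw with heqw | hltw
      · rw [finv]
        simp only [heqw, if_pos le_rfl, Real.one_rpow]
        push_cast
        rw [div_one]
      · rw [finv]; simp only [if_neg (not_le.mpr hltw)]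
    have hle : ContinuousWithinAt (finv α) {w : ℂ | ‖w‖ ≤ 1} z := by
      apply ((continuous_const.mul continuous_id).continuousWithinAt).congr hbdry
      exact hbdry z (le_of_eq heq)
    have hge : ContinuousWithinAt (finv α) {w : ℂ | 1 ≤ ‖w‖} z := by
      apply ((hgeCont z (by rw [heq]; exact one_ne_zero)).continuousWithinAt).congr
      · intro w hw
        rw [finv]; exact if_pos hw
      · rw [finv]; exact if_pos (le_of_eq heq.symm)
    have huniv := hle.union hge
    rw [show {w : ℂ | ‖w‖ ≤ 1} ∪ {w : ℂ | 1 ≤ ‖w‖} = Set.univ by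
      ext w; simp [le_total]] at huniv
    rwa [continuousWithinAt_univ] at huniv
  · have h0 : ‖z‖ ≠ 0 := by
      intro h; rw [h] at hgt; linarith
    apply (hgeCont z h0).congr
    have hopen : IsOpen {w : ℂ | 1 < ‖w‖} :=
      isOpen_lt continuous_const continuous_norm
    filter_upwards [hopen.mem_nhds hgt] with w hw
    rw [finv]; simp only [if_pos (le_of_lt hw)]

include hα hfdef in
lemma f_homeo : IsHomeomorph f :=
  Homeomorph.isHomeomorph
    { toFun := f
      invFun := finv α
      left_inv := left_inv hα f hfdef
      right_inv := right_inv hα f hfdef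
      continuous_toFun := f_cont hα f hfdef
      continuous_invFun := finv_cont hα }

end Homeo

lemma sphere_measure_zero :
    (volume : Measure ℂ) {z : ℂ | ‖z‖ = Real.exp (Real.exp 1)} = 0 := by
  have h : {z : ℂ | ‖z‖ = Real.exp (Real.exp 1)}
      = sphere (0:ℂ) (Real.exp (Real.exp 1)) := by
    ext z
    simp [Complex.dist_eq]
  rw [h]
  exact Measure.addHaar_sphere _ _ _

section Final

variable {α : ℝ} (hα : 0 < α) (f K : ℂ → ℂ)
variable (hfdef : f = fun z => if Real.exp (Real.exp 1) ≤ ‖z‖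
      then ((Real.log (Real.log (‖z‖)) ^ (1 / α) : ℝ) : ℂ) * (z / (‖z‖ : ℂ))
      else ((Real.exp (-Real.exp 1) : ℝ) : ℂ) * z)
variable (hKdef : K = fun z => if Real.exp (Real.exp 1) ≤ ‖z‖
      then -((Real.sqrt α * Real.sqrt (Real.log (‖z‖)) *
          Real.sqrt (Real.log (Real.log (‖z‖))) : ℝ) : ℂ) * (z / (starRingEnd ℂ) z)
      else -(z / (starRingEnd ℂ) z))

include hα hfdef in
lemma ae_diff : ∀ᵐ z ∂(volume : Measure ℂ), DifferentiableAt ℝ f z := by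
  rw [MeasureTheory.ae_iff]
  apply MeasureTheory.measure_mono_null _ sphere_measure_zero
  intro z hz
  by_contra h
  rcases lt_trichotomy (‖z‖) (Real.exp (Real.exp 1)) with hlt | heq | hgt
  · exact hz (inner_region hα f hfdef z hlt).1
  · exact h heq
  · exact hz (fder hα f hfdef z hgt).1

include hα hfdef hKdef in
lemma ae_eqn : ∀ᵐ z ∂(volume : Measure ℂ), beltramiEq 0 K f z := by
  rw [MeasureTheory.ae_iff]
  apply MeasureTheory.measure_mono_null _ sphere_measure_zero
  intro z hz
  by_contra h
  rcases lt_trichotomy (‖z‖) (Real.exp (Real.exp 1)) with hlt | heq | hgt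
  · exact hz (beltrami_inner hα f K hfdef hKdef z hlt)
  · exact h heq
  · exact hz (beltrami_outer hα f K hfdef hKdef z hgt)

include hα hKdef in
lemma kappa_eq (r : ℝ) (hr : Real.exp (Real.exp 1) ≤ r) :
    kappa K 0 r = α * Real.log r * Real.log (Real.log r) := by
  obtain ⟨h1, h2, h3, hL, hu⟩ := basic_facts hr
  have hr0 : 0 < r := lt_trans one_pos h1
  have habs : ∀ θ : ℝ, ‖(r:ℂ) * Complex.exp ((θ:ℂ)*Complex.I)‖ = r := by
    intro θ
    rw [norm_mul, Complex.norm_real, Real.norm_eq_abs, abs_of_pos hr0, Complex.norm_exp_ofReal_mul_I, mul_one]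
  have hint : ∀ θ : ℝ, ‖K (0 + (r:ℂ) * Complex.exp ((θ:ℂ)*Complex.I))‖ ^ 2
      = α * Real.log r * Real.log (Real.log r) := by
    intro θ
    have hz0 : (r:ℂ) * Complex.exp ((θ:ℂ)*Complex.I) ≠ 0 := by
      apply norm_ne_zero_iff.mp
      rw [habs θ]
      exact hr0.ne'
    have hC0 : 0 ≤ Real.sqrt α * Real.sqrt (Real.log r) * Real.sqrt (Real.log (Real.log r)) := by
      positivity
    rw [zero_add, hKdef]
    simp only [habs θ, if_pos hr]
    rw [neg_mul, norm_neg, norm_mul, Complex.norm_real, Real.norm_eq_abs, abs_of_nonneg hC0, norm_div,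
      Complex.norm_conj, div_self (norm_ne_zero_iff.mpr hz0), mul_one, mul_pow, mul_pow,
      Real.sq_sqrt hα.le, Real.sq_sqrt hL.le, Real.sq_sqrt hu.le]
  rw [kappa, intervalIntegral.integral_congr
    (g := fun _ : ℝ => α * Real.log r * Real.log (Real.log r)) (fun θ _ => hint θ),
    intervalIntegral.integral_const, smul_eq_mul, sub_zero]
  have hπ : Real.pi ≠ 0 := Real.pi_ne_zero
  field_simp
  try ring

include hα hKdef in
lemma tendsto_kappa : Tendsto (fun r : ℝ => kappa K 0 r / Real.log r) atTop atTop := by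
  have h1 : Tendsto (fun r : ℝ => α * Real.log (Real.log r)) atTop atTop :=
    (Real.tendsto_log_atTop.comp Real.tendsto_log_atTop).const_mul_atTop hα
  apply h1.congr'
  filter_upwards [eventually_ge_atTop (Real.exp (Real.exp 1))] with r hr
  obtain ⟨h1', h2, h3, hL, hu⟩ := basic_facts hr
  rw [kappa_eq hα K hKdef r hr]
  field_simp

include hα hfdef in
lemma Mf_eq (R : ℝ) (hR : Real.exp (Real.exp 1) ≤ R) :
    Mf f 0 R = Real.log (Real.log R) ^ (1/α) := by
  obtain ⟨h1, h2, h3, hL, hu⟩ := basic_facts hR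
  have hR0 : 0 < R := lt_trans one_pos h1
  have hc0 : 0 ≤ Real.log (Real.log R) ^ (1/α) := Real.rpow_nonneg hu.le _
  have hf0 : f 0 = 0 := by
    rw [hfdef]
    simp only [norm_zero]
    rw [if_neg (not_le.mpr (Real.exp_pos _)), mul_zero]
  have hval : ∀ z ∈ sphere (0:ℂ) R,
      ‖f z - f 0‖ = Real.log (Real.log R) ^ (1/α) := by
    intro z hz
    have hzR : ‖z‖ = R := by
      simpa [Complex.dist_eq, sub_zero] using mem_sphere_iff_norm.mp hz
    rw [hf0, sub_zero, hfdef]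
    simp only [hzR, if_pos hR]
    rw [norm_mul, Complex.norm_real, Real.norm_eq_abs, abs_of_nonneg hc0, norm_div, Complex.norm_real, Real.norm_eq_abs,
      abs_of_pos hR0, hzR, div_self hR0.ne', mul_one]
  have himg : (fun z => ‖f z - f 0‖) '' sphere 0 R
      = {Real.log (Real.log R) ^ (1/α)} := by
    apply Set.eq_singleton_iff_nonempty_unique_mem.mpr
    constructor
    · exact ((NormedSpace.sphere_nonempty.mpr hR0.le)).image _
    · rintro x ⟨z, hz, rfl⟩
      exact hval z hz
  rw [Mf, himg, csSup_singleton]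

include hα hfdef in
lemma tendsto_Mf :
    Tendsto (fun R : ℝ => Mf f 0 R / (Real.log R) ^ (1/α)) atTop (nhds 0) := by
  have h0 : Tendsto (fun R : ℝ => Real.log (Real.log R) / Real.log R) atTop (nhds 0) :=
    (Real.isLittleO_log_id_atTop.tendsto_div_nhds_zero).comp Real.tendsto_log_atTop
  have h1 : Tendsto (fun x : ℝ => x ^ (1/α)) (nhds 0) (nhds 0) := by
    have := (Real.continuousAt_rpow_const 0 (1/α) (Or.inr (by positivity))).tendsto
    rwa [Real.zero_rpow (show (1/α) ≠ 0 by positivity)] at this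
  have h2 := h1.comp h0
  apply h2.congr'
  filter_upwards [eventually_ge_atTop (Real.exp (Real.exp 1))] with R hR
  obtain ⟨h1', h2', h3, hL, hu⟩ := basic_facts hR
  show (Real.log (Real.log R) / Real.log R) ^ (1/α) = Mf f 0 R / (Real.log R) ^ (1/α)
  rw [Mf_eq hα f hfdef R hR, Real.div_rpow hu.le hL.le]

end Final

end Stmt18

/-- For `α > 0`, the map `f(z) = (ln ln |z|)^{1/α} z/|z|` for `|z| ≥ e^e`,
`f(z) = e^{-e} z` for `|z| < e^e`, is a homeomorphism of `ℂ` onto `ℂ`, differentiable a.e.,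
with `J_f(r e^{iθ}) = α⁻¹ (ln ln r)^{(2-α)/α} (ln r)⁻¹ r⁻² > 0` for `r > e^e`; it solves a.e.
the equation `f_z̄ - (z/z̄) f_z = K(z) |J_f|^{1/2}` with the indicated `K`; moreover
`κ(0,r) = α ln r · ln ln r` for `r ≥ e^e`, so `κ(0,r)/ln r → ∞`, while
`M_f(0,R) = (ln ln R)^{1/α}` (for `R ≥ e^e`), hence `M_f(0,R)/(ln R)^{1/α} → 0`. -/
theorem stmt_18 (α : ℝ) (hα : 0 < α) (f K : ℂ → ℂ)
    (hfdef : f = fun z => if Real.exp (Real.exp 1) ≤ ‖z‖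
      then ((Real.log (Real.log (‖z‖)) ^ (1 / α) : ℝ) : ℂ) * (z / (‖z‖ : ℂ))
      else ((Real.exp (-Real.exp 1) : ℝ) : ℂ) * z)
    (hKdef : K = fun z => if Real.exp (Real.exp 1) ≤ ‖z‖
      then -((Real.sqrt α * Real.sqrt (Real.log (‖z‖)) *
          Real.sqrt (Real.log (Real.log (‖z‖))) : ℝ) : ℂ) * (z / (starRingEnd ℂ) z)
      else -(z / (starRingEnd ℂ) z)) :
    IsHomeomorph f ∧
    (∀ᵐ z ∂(volume : Measure ℂ), DifferentiableAt ℝ f z) ∧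
    (∀ r θ : ℝ, Real.exp (Real.exp 1) < r →
      jac f ((r : ℂ) * Complex.exp ((θ : ℂ) * Complex.I))
          = α⁻¹ * Real.log (Real.log r) ^ ((2 - α) / α) * (Real.log r)⁻¹ * (r ^ 2)⁻¹ ∧
      0 < jac f ((r : ℂ) * Complex.exp ((θ : ℂ) * Complex.I))) ∧
    (∀ᵐ z ∂(volume : Measure ℂ), beltramiEq 0 K f z) ∧
    (∀ r : ℝ, Real.exp (Real.exp 1) ≤ r →
      kappa K 0 r = α * Real.log r * Real.log (Real.log r)) ∧
    Tendsto (fun r : ℝ => kappa K 0 r / Real.log r) atTop atTop ∧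
    (∀ R : ℝ, Real.exp (Real.exp 1) ≤ R → Mf f 0 R = Real.log (Real.log R) ^ (1 / α)) ∧
    Tendsto (fun R : ℝ => Mf f 0 R / (Real.log R) ^ (1 / α)) atTop (nhds 0) := by
  refine ⟨Stmt18.f_homeo hα f hfdef, Stmt18.ae_diff hα f hfdef, ?_,
    Stmt18.ae_eqn hα f K hfdef hKdef, fun r hr => Stmt18.kappa_eq hα K hKdef r hr,
    Stmt18.tendsto_kappa hα K hKdef, fun R hR => Stmt18.Mf_eq hα f hfdef R hR,
    Stmt18.tendsto_Mf hα f hfdef⟩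
  intro r θ hr
  have hr0 : 0 < r := lt_trans (Real.exp_pos _) hr
  have habs : ‖(r:ℂ) * Complex.exp ((θ:ℂ)*Complex.I)‖ = r := by
    rw [norm_mul, Complex.norm_real, Real.norm_eq_abs, abs_of_pos hr0, Complex.norm_exp_ofReal_mul_I, mul_one]
  have hgt : Real.exp (Real.exp 1) < ‖(r:ℂ) * Complex.exp ((θ:ℂ)*Complex.I)‖ := by
    rw [habs]; exact hr
  constructor
  · rw [Stmt18.jac_eq hα f hfdef _ hgt, habs]
  · exact Stmt18.jac_pos hα f hfdef _ hgt
end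
end

section
/- The map f: ℂ → ℂ with f(z) = z·e^{2i·ln|z|} for z ≠ 0 and f(0) = 0 satisfies, for all z ≠ 0: f_z = (1+i)·e^{2i·ln|z|}, f_z̄ = (iz/z̄)·e^{2i·ln|z|}, hence J_f(z) = |f_z|² − |f_z̄|² = 1, and f solves the equation f_z̄ − (z/z̄)·f_z = K(z)·|J_f(z)|^{1/2} with K(z) = −(z/z̄)·e^{2i·ln|z|}. -/
open MeasureTheory Filter Metric

noncomputable section

/-- The map `f(z) = z e^{2i ln |z|}` (with `f 0 = 0`) satisfies, for all
`z ≠ 0`: `f_z = (1+i) e^{2i ln |z|}`, `f_z̄ = (iz/z̄) e^{2i ln |z|}`, hence `J_f(z) = 1`, and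
`f` solves `f_z̄ - (z/z̄) f_z = K(z) |J_f(z)|^{1/2}` with `K(z) = -(z/z̄) e^{2i ln |z|}`. -/
theorem stmt_19 (f : ℂ → ℂ)
    (hf : f = fun z => if z = 0 then 0
      else z * Complex.exp (2 * Complex.I * (Real.log (‖z‖) : ℂ))) :
    ∀ z : ℂ, z ≠ 0 →
      wDz f z = (1 + Complex.I) * Complex.exp (2 * Complex.I * (Real.log (‖z‖) : ℂ)) ∧
      wDzbar f z
        = Complex.I * z / (starRingEnd ℂ) z
            * Complex.exp (2 * Complex.I * (Real.log (‖z‖) : ℂ)) ∧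
      jac f z = 1 ∧
      wDzbar f z - (z / (starRingEnd ℂ) z) * wDz f z
        = (-(z / (starRingEnd ℂ) z)
              * Complex.exp (2 * Complex.I * (Real.log (‖z‖) : ℂ)))
            * (Real.sqrt |jac f z| : ℂ) := by
  intro z hz
  have hzc : (starRingEnd ℂ) z ≠ 0 := by simpa using hz
  have hmem : z * (starRingEnd ℂ) z ∈ Complex.slitPlane := by
    rw [Complex.mul_conj]
    exact Complex.ofReal_mem_slitPlane.2 (Complex.normSq_pos.2 hz)
  have hconj : HasFDerivAt (starRingEnd ℂ) (Complex.conjCLE : ℂ →L[ℝ] ℂ) z :=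
    (Complex.conjCLE : ℂ →L[ℝ] ℂ).hasFDerivAt
  have hmul := (hasFDerivAt_id z).mul hconj
  have hlog := ((Complex.hasDerivAt_log hmem).hasFDerivAt.restrictScalars ℝ).comp z hmul
  have hIl := hlog.const_mul Complex.I
  have hexp := ((Complex.hasDerivAt_exp _).hasFDerivAt.restrictScalars ℝ).comp z hIl
  have hg := (hasFDerivAt_id z).mul hexp
  simp only [id] at hg
  have hEx : ∀ w : ℂ, w ≠ 0 → Complex.exp (Complex.I * Complex.log (w * (starRingEnd ℂ) w))
      = Complex.exp (2 * Complex.I * (Real.log (‖w‖) : ℂ)) := by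
    intro w hw
    rw [Complex.mul_conj, ← Complex.ofReal_log (Complex.normSq_nonneg w),
      Complex.normSq_eq_norm_sq, Real.log_pow]
    push_cast
    ring_nf
  have heq : f =ᶠ[nhds z] fun w : ℂ =>
      w * Complex.exp (Complex.I * Complex.log (w * (starRingEnd ℂ) w)) := by
    filter_upwards [IsOpen.mem_nhds isOpen_ne hz] with w hw
    rw [hf]
    simp only [if_neg hw, hEx w hw]
  have hfd := (hg.congr_of_eventuallyEq heq).fderiv
  set E := Complex.exp (2 * Complex.I * (Real.log (‖z‖) : ℂ)) with hE
  have h1 : fderiv ℝ f z 1 = E * (1 + Complex.I + Complex.I * z / (starRingEnd ℂ) z) := by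
    rw [hfd]
    simp only [Function.comp, ContinuousLinearMap.add_apply, ContinuousLinearMap.smul_apply,
      ContinuousLinearMap.comp_apply, ContinuousLinearMap.smulRight_apply,
      ContinuousLinearMap.coe_restrictScalars', ContinuousLinearMap.one_apply,
      ContinuousLinearMap.coe_id', id, smul_eq_mul, Complex.conjCLE_apply,
      ContinuousLinearEquiv.coe_coe, map_one, Complex.conj_I, map_mul, Pi.mul_apply,
      ContinuousLinearMap.toSpanSingleton_apply, hEx z hz, ← hE]
    field_simp
    ring_nf
    try simp only [Complex.I_sq]
    try ring
  have hI : fderiv ℝ f z Complex.I = E * (Complex.I - 1 + z / (starRingEnd ℂ) z) := by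
    rw [hfd]
    simp only [Function.comp, ContinuousLinearMap.add_apply, ContinuousLinearMap.smul_apply,
      ContinuousLinearMap.comp_apply, ContinuousLinearMap.smulRight_apply,
      ContinuousLinearMap.coe_restrictScalars', ContinuousLinearMap.one_apply,
      ContinuousLinearMap.coe_id', id, smul_eq_mul, Complex.conjCLE_apply,
      ContinuousLinearEquiv.coe_coe, map_one, Complex.conj_I, map_mul, Pi.mul_apply,
      ContinuousLinearMap.toSpanSingleton_apply, hEx z hz, ← hE]
    field_simp
    ring_nf
    try simp only [Complex.I_sq]
    try ring
  have hwz : wDz f z = (1 + Complex.I) * E := by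
    rw [wDz, h1, hI]
    field_simp
    ring_nf
    try simp only [Complex.I_sq]
    try ring
  have hwzb : wDzbar f z = Complex.I * z / (starRingEnd ℂ) z * E := by
    rw [wDzbar, h1, hI]
    field_simp
    ring_nf
    try simp only [Complex.I_sq]
    try ring
  have hEabs : ‖E‖ = 1 := by
    rw [hE, Complex.norm_exp]
    norm_num [Complex.mul_re, Complex.mul_im]
  have hjac : jac f z = 1 := by
    rw [jac, hwz, hwzb]
    rw [norm_mul, norm_mul, norm_div, norm_mul, hEabs]
    simp only [Complex.norm_I, Complex.norm_conj]
    have habs : ‖z‖ ≠ 0 := by simpa using hz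
    have h2 : ‖1 + Complex.I‖ ^ 2 = 2 := by
      rw [Complex.sq_norm]
      norm_num [Complex.normSq_apply]
    field_simp
    nlinarith [h2, sq_nonneg ‖z‖]
  refine ⟨hwz, hwzb, hjac, ?_⟩
  rw [hwz, hwzb, hjac]
  norm_num
  field_simp
  ring
end
end
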